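/- Assume G has the 4-cycle chord property and the 5-cycle chord property, the 10-cycle O is chordless, and w is a vertex of G whose images under the ten elements of the dihedral group generated by s and t are pairwise distinct. If w is adjacent to 5 consecutive vertices of O, then there exists a vertex of G adjacent to 6 consecutive vertices of O. -/

import Mathlib

open Fin.NatCast

set_option maxHeartbeats 1000000 in
theorem stmt14 {V : Type*} (G : SimpleGraph V)
    (hchord4 : ∀ w1 w2 w3 w4 : V, G.Adj w1 w2 → G.Adj w2 w3 → G.Adj w3 w4 →
      G.Adj w4 w1 → w1 ≠ w3 → w2 ≠ w4 → G.Adj w1 w3 ∨ G.Adj w2 w4)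
    (hchord5 : ∀ w1 w2 w3 w4 w5 : V,
      ([w1, w2, w3, w4, w5] : List V).Pairwise (· ≠ ·) →
      G.Adj w1 w2 → G.Adj w2 w3 → G.Adj w3 w4 → G.Adj w4 w5 → G.Adj w5 w1 →
      G.Adj w1 w3 ∨ G.Adj w2 w4 ∨ G.Adj w3 w5 ∨ G.Adj w4 w1 ∨ G.Adj w5 w2)
    (s t : G ≃g G)
    (hss : ∀ z, s (s z) = z) (htt : ∀ z, t (t z) = z)
    (hst5 : ∀ z : V, s (t (s (t (s (t (s (t (s (t (z)))))))))) = z)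
    (v : V) (hvs : G.Adj v (s v)) (hvt : G.Adj v (t v))
    (hdist : ([v, s v, s (t v), s (t (s v)), s (t (s (t v))), s (t (s (t (s v)))), s (t (s (t (s (t v))))), s (t (s (t (s (t (s v)))))), s (t (s (t (s (t (s (t v))))))), s (t (s (t (s (t (s (t (s v))))))))] : List V).Pairwise (· ≠ ·))
    (o : Fin 10 → V) (ho : o = ![v, s v, s (t v), s (t (s v)), s (t (s (t v))), s (t (s (t (s v)))), s (t (s (t (s (t v))))), s (t (s (t (s (t (s v)))))), s (t (s (t (s (t (s (t v))))))), s (t (s (t (s (t (s (t (s v))))))))])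
    (hchordless : ∀ i j : Fin 10, i ≠ j → j ≠ i + 1 → i ≠ j + 1 → ¬ G.Adj (o i) (o j))
    (w : V) (hworbit : ([w, s w, s (t w), s (t (s w)), s (t (s (t w))), s (t (s (t (s w)))), s (t (s (t (s (t w))))), s (t (s (t (s (t (s w)))))), s (t (s (t (s (t (s (t w))))))), s (t (s (t (s (t (s (t (s w))))))))] : List V).Pairwise (· ≠ ·))
    (hyp : ∃ i : Fin 10, ∀ m : ℕ, m < 5 → G.Adj w (o (i + (m : Fin 10)))) :
    ∃ u : V, ∃ i : Fin 10, ∀ m : ℕ, m < 6 → G.Adj u (o (i + (m : Fin 10))) := by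
  obtain ⟨i, hw⟩ := hyp
  -- injectivity of o
  have hoinj : ∀ a b : Fin 10, o a = o b → a = b := by
    have hinj := List.nodup_iff_injective_get.mp (hdist : _root_.List.Nodup _)
    have key : ∀ a : Fin 10, o a = ([v, s v, s (t v), s (t (s v)), s (t (s (t v))), s (t (s (t (s v)))), s (t (s (t (s (t v))))), s (t (s (t (s (t (s v)))))), s (t (s (t (s (t (s (t v))))))), s (t (s (t (s (t (s (t (s v))))))))] : List V).get (Fin.cast (by norm_num) a) := by
      subst ho; intro a; fin_cases a <;> rfl
    intro a b h
    rw [key a, key b] at h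
    simpa [Fin.ext_iff] using hinj h
  have hoinj' : ∀ (k c c' : Fin 10), c ≠ c' → o (k + c) ≠ o (k + c') :=
    fun k c c' h he => h (add_left_cancel (hoinj _ _ he))
  -- non-adjacency of non-consecutive cycle vertices
  have hNA : ∀ (k c c' : Fin 10), c ≠ c' → c' ≠ c + 1 → c ≠ c' + 1 →
      ¬ G.Adj (o (k + c)) (o (k + c')) := by
    intro k c c' h1 h2 h3
    refine hchordless (k + c) (k + c') (fun he => h1 (add_left_cancel he)) ?_ ?_
    · intro he; rw [add_assoc] at he; exact h2 (add_left_cancel he)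
    · intro he; rw [add_assoc] at he; exact h3 (add_left_cancel he)
  -- rotation by 2
  have horot : ∀ k : Fin 10, s (t (o k)) = o (k + 2) := by
    intro k
    fin_cases k <;> simp [ho] <;>
      first | rfl | exact hst5 v | exact s.injective (hst5 (s v))
  have hrot : ∀ x y : V, G.Adj x y → G.Adj (s (t x)) (s (t y)) :=
    fun x y h => s.map_adj_iff.mpr (t.map_adj_iff.mpr h)
  -- the edges of the 10-cycle
  have hOc : ∀ k : Fin 10, G.Adj (o k) (o (k + 1)) := by
    have a0 : G.Adj v (s v) := hvs
    have a1 : G.Adj (s v) (s (t v)) := s.map_adj_iff.mpr hvt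
    have a2 := hrot _ _ a0
    have a3 := hrot _ _ a1
    have a4 := hrot _ _ a2
    have a5 := hrot _ _ a3
    have a6 := hrot _ _ a4
    have a7 := hrot _ _ a5
    have a8 := hrot _ _ a6
    have a9 := hrot _ _ a7
    rw [hst5 v] at a9
    intro k
    fin_cases k <;> simp [ho] <;> assumption
  -- edges written with offsets
  have hOc' : ∀ (k c c' : Fin 10), c' = c + 1 → G.Adj (o (k + c)) (o (k + c')) := by
    intro k c c' h; subst h; rw [← add_assoc]; exact hOc (k + c)
  -- a vertex with a window of 5 is not on the cycle
  have hnotO : ∀ (x : V) (k : Fin 10), (∀ m : ℕ, m < 5 → G.Adj x (o (k + (m : Fin 10)))) →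
      ∀ j : Fin 10, x ≠ o j := by
    intro x k hx j hxj
    have key : ∀ c : Fin 10, G.Adj (o j) (o c) → (c = j + 1 ∨ j = c + 1) := by
      intro c hc
      by_contra hcon
      push_neg at hcon
      exact hchordless j c (by rintro rfl; exact G.irrefl hc) hcon.1 hcon.2 hc
    have h0 := hx 0 (by norm_num); rw [Nat.cast_zero] at h0; rw [hxj] at h0
    have h2 := hx 2 (by norm_num); rw [Nat.cast_ofNat] at h2; rw [hxj] at h2
    have h4 := hx 4 (by norm_num); rw [Nat.cast_ofNat] at h4; rw [hxj] at h4
    have k0 := key _ h0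
    have k2 := key _ h2
    have k4 := key _ h4
    have hdec : ∀ j k : Fin 10, (k + 0 = j + 1 ∨ j = k + 0 + 1) →
        (k + 2 = j + 1 ∨ j = k + 2 + 1) → (k + 4 = j + 1 ∨ j = k + 4 + 1) → False := by
      decide
    exact hdec j k k0 k2 k4
  -- window shift by rotation
  have hWrot : ∀ (x : V) (k : Fin 10),
      (∀ m : ℕ, m < 5 → G.Adj x (o (k + (m : Fin 10)))) →
      (∀ m : ℕ, m < 5 → G.Adj (s (t x)) (o (k + 2 + (m : Fin 10)))) := by
    intro x k hx m hm
    have h := hrot _ _ (hx m hm)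
    rw [horot (k + (m : Fin 10))] at h
    rwa [show k + (m : Fin 10) + 2 = k + 2 + (m : Fin 10) by exact add_right_comm _ _ _] at h
  have hshift : ∀ (x : V) (k k' : Fin 10), k = k' →
      (∀ m : ℕ, m < 5 → G.Adj x (o (k + (m : Fin 10)))) →
      (∀ m : ℕ, m < 5 → G.Adj x (o (k' + (m : Fin 10)))) := by
    rintro x k k' rfl h; exact h
  -- adjacency of vertices with overlapping windows
  have hB : ∀ (a b : V) (k : Fin 10), a ≠ b →
      (∀ m : ℕ, m < 5 → G.Adj a (o (k + (m : Fin 10)))) →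
      (∀ m : ℕ, m < 5 → G.Adj b (o (k + 2 + (m : Fin 10)))) →
      G.Adj a b := by
    intro a b k hab ha hb
    have ha2 : G.Adj a (o (k + 2)) := by
      have := ha 2 (by norm_num); rwa [Nat.cast_ofNat] at this
    have ha4 : G.Adj a (o (k + 4)) := by
      have := ha 4 (by norm_num); rwa [Nat.cast_ofNat] at this
    have hb0 : G.Adj b (o (k + 2)) := by
      have := hb 0 (by norm_num); rwa [Nat.cast_zero, add_zero] at this
    have hb2 : G.Adj b (o (k + 4)) := by
      have := hb 2 (by norm_num)
      rwa [Nat.cast_ofNat, add_assoc, show (2 : Fin 10) + 2 = 4 from by decide] at this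
    rcases hchord4 a (o (k + 2)) b (o (k + 4)) ha2 hb0.symm hb2 ha4.symm hab
        (hoinj' k 2 4 (by decide)) with h | h
    · exact h
    · exact absurd h (hNA k 2 4 (by decide) (by decide) (by decide))
  -- main combination lemma
  have hC : ∀ (a b : V) (k : Fin 10), a ≠ b → (∀ j, a ≠ o j) → (∀ j, b ≠ o j) →
      (∀ m : ℕ, m < 5 → G.Adj a (o (k + (m : Fin 10)))) →
      (∀ m : ℕ, m < 5 → G.Adj b (o (k + 4 + (m : Fin 10)))) →
      G.Adj a b →
      ∃ u : V, ∃ i : Fin 10, ∀ m : ℕ, m < 6 → G.Adj u (o (i + (m : Fin 10))) := by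
    intro a b k hab haO hbO ha hb hadj
    have ha0 : G.Adj a (o (k + 0)) := by
      have := ha 0 (by norm_num); rwa [Nat.cast_zero] at this
    have ha1 : G.Adj a (o (k + 1)) := by
      have := ha 1 (by norm_num); rwa [Nat.cast_one] at this
    have ha2 : G.Adj a (o (k + 2)) := by
      have := ha 2 (by norm_num); rwa [Nat.cast_ofNat] at this
    have ha3 : G.Adj a (o (k + 3)) := by
      have := ha 3 (by norm_num); rwa [Nat.cast_ofNat] at this
    have ha4 : G.Adj a (o (k + 4)) := by
      have := ha 4 (by norm_num); rwa [Nat.cast_ofNat] at this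
    have hb8 : G.Adj b (o (k + 8)) := by
      have := hb 4 (by norm_num)
      rwa [Nat.cast_ofNat, add_assoc, show (4 : Fin 10) + 4 = 8 from by decide] at this
    have winA : G.Adj a (o (k + 9)) →
        ∃ u : V, ∃ i : Fin 10, ∀ m : ℕ, m < 6 → G.Adj u (o (i + (m : Fin 10))) := by
      intro h9
      refine ⟨a, k + 9, ?_⟩
      intro m hm
      interval_cases m
      · rwa [Nat.cast_zero, add_zero]
      · rw [Nat.cast_one, add_assoc, show (9 : Fin 10) + 1 = 0 from by decide]; exact ha0
      · rw [Nat.cast_ofNat, add_assoc, show (9 : Fin 10) + 2 = 1 from by decide]; exact ha1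
      · rw [Nat.cast_ofNat, add_assoc, show (9 : Fin 10) + 3 = 2 from by decide]; exact ha2
      · rw [Nat.cast_ofNat, add_assoc, show (9 : Fin 10) + 4 = 3 from by decide]; exact ha3
      · rw [Nat.cast_ofNat, add_assoc, show (9 : Fin 10) + 5 = 4 from by decide]; exact ha4
    have winB : G.Adj b (o (k + 9)) →
        ∃ u : V, ∃ i : Fin 10, ∀ m : ℕ, m < 6 → G.Adj u (o (i + (m : Fin 10))) := by
      intro h9
      refine ⟨b, k + 4, ?_⟩
      intro m hm
      by_cases hm5 : m < 5
      · exact hb m hm5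
      · have hm6 : m = 5 := by omega
        subst hm6
        rw [Nat.cast_ofNat, add_assoc, show (4 : Fin 10) + 5 = 9 from by decide]
        exact h9
    have pw : ([a, b, o (k + 8), o (k + 9), o (k + 0)] : List V).Pairwise (· ≠ ·) := by
      have n1 := haO (k + 8); have n2 := haO (k + 9); have n3 := haO (k + 0)
      have n4 := hbO (k + 8); have n5 := hbO (k + 9); have n6 := hbO (k + 0)
      have n7 := hoinj' k 8 9 (by decide)
      have n8 := hoinj' k 8 0 (by decide)
      have n9 := hoinj' k 9 0 (by decide)
      simp only [List.pairwise_cons, List.mem_cons, List.mem_singleton, List.not_mem_nil,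
        forall_eq_or_imp, forall_eq, false_implies, implies_true, and_true, ne_eq,
        List.Pairwise.nil]
      tauto
    rcases hchord5 a b (o (k + 8)) (o (k + 9)) (o (k + 0)) pw hadj hb8
        (hOc' k 8 9 (by decide)) (hOc' k 9 0 (by decide)) ha0.symm with h | h | h | h | h
    · rcases hchord4 a (o (k + 8)) (o (k + 9)) (o (k + 0)) h (hOc' k 8 9 (by decide))
          (hOc' k 9 0 (by decide)) ha0.symm (haO _) (hoinj' k 8 0 (by decide)) with h' | h'
      · exact winA h'
      · exact absurd h' (hNA k 8 0 (by decide) (by decide) (by decide))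
    · exact winB h
    · exact absurd h (hNA k 8 0 (by decide) (by decide) (by decide))
    · exact winA h.symm
    · rcases hchord4 b (o (k + 0)) (o (k + 9)) (o (k + 8)) h.symm
          ((hOc' k 9 0 (by decide)).symm) ((hOc' k 8 9 (by decide)).symm) hb8.symm (hbO _)
          (hoinj' k 0 8 (by decide)) with h' | h'
      · exact winB h'
      · exact absurd h' (hNA k 0 8 (by decide) (by decide) (by decide))
  -- distinctness of the rotated copies of w
  have hwinj := List.nodup_iff_injective_get.mp (hworbit : _root_.List.Nodup _)
  have hwkey : ∀ a : Fin 10, (![w, s w, s (t w), s (t (s w)), s (t (s (t w))), s (t (s (t (s w)))), s (t (s (t (s (t w))))), s (t (s (t (s (t (s w)))))), s (t (s (t (s (t (s (t w))))))), s (t (s (t (s (t (s (t (s w))))))))] : Fin 10 → V) a = ([w, s w, s (t w), s (t (s w)), s (t (s (t w))), s (t (s (t (s w)))), s (t (s (t (s (t w))))), s (t (s (t (s (t (s w)))))), s (t (s (t (s (t (s (t w))))))), s (t (s (t (s (t (s (t (s w))))))))] : List V).get (Fin.cast (by norm_num) a) := by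
    intro a; fin_cases a <;> rfl
  have hwne : ∀ a b : Fin 10, a ≠ b →
      (![w, s w, s (t w), s (t (s w)), s (t (s (t w))), s (t (s (t (s w)))), s (t (s (t (s (t w))))), s (t (s (t (s (t (s w)))))), s (t (s (t (s (t (s (t w))))))), s (t (s (t (s (t (s (t (s w))))))))] : Fin 10 → V) a ≠
      (![w, s w, s (t w), s (t (s w)), s (t (s (t w))), s (t (s (t (s w)))), s (t (s (t (s (t w))))), s (t (s (t (s (t (s w)))))), s (t (s (t (s (t (s (t w))))))), s (t (s (t (s (t (s (t (s w))))))))] : Fin 10 → V) b := by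
    intro a b hab he
    rw [hwkey a, hwkey b] at he
    exact hab (by simpa [Fin.ext_iff] using hwinj he)
  have hne01 : w ≠ s (t w) := hwne 0 2 (by decide)
  have hne02 : w ≠ s (t (s (t w))) := hwne 0 4 (by decide)
  have hne03 : w ≠ s (t (s (t (s (t w))))) := hwne 0 6 (by decide)
  have hne04 : w ≠ s (t (s (t (s (t (s (t w))))))) := hwne 0 8 (by decide)
  have hne12 : s (t w) ≠ s (t (s (t w))) := hwne 2 4 (by decide)
  have hne13 : s (t w) ≠ s (t (s (t (s (t w))))) := hwne 2 6 (by decide)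
  have hne14 : s (t w) ≠ s (t (s (t (s (t (s (t w))))))) := hwne 2 8 (by decide)
  have hne23 : s (t (s (t w))) ≠ s (t (s (t (s (t w))))) := hwne 4 6 (by decide)
  have hne24 : s (t (s (t w))) ≠ s (t (s (t (s (t (s (t w))))))) := hwne 4 8 (by decide)
  have hne34 : s (t (s (t (s (t w))))) ≠ s (t (s (t (s (t (s (t w))))))) := hwne 6 8 (by decide)
  -- windows of the rotated copies of w
  have hw1 := hWrot w i hw
  have hw2r := hWrot _ _ hw1
  have hw2 := hshift _ _ (i + 4)
    (by rw [add_assoc, show (2 : Fin 10) + 2 = 4 from by decide]) hw2r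
  have hw3r := hWrot _ _ hw2
  have hw3 := hshift _ _ (i + 6)
    (by rw [add_assoc, show (4 : Fin 10) + 2 = 6 from by decide]) hw3r
  have hw4r := hWrot _ _ hw3
  have hw4 := hshift _ _ (i + 8)
    (by rw [add_assoc, show (6 : Fin 10) + 2 = 8 from by decide]) hw4r
  have hw0s := hshift w i (i + 8 + 2)
    (by rw [add_assoc, show (8 : Fin 10) + 2 = 0 from by decide, add_zero]) hw
  -- edges between successive copies
  have e01 := hB _ _ i hne01 hw hw1
  have e12 := hB _ _ (i + 2) hne12 hw1 hw2r
  have e23 := hB _ _ (i + 4) hne23 hw2 hw3r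
  have e34 := hB _ _ (i + 6) hne34 hw3 hw4r
  have e40 := hB _ _ (i + 8) hne04.symm hw4 hw0s
  have pw5 : ([w, s (t w), s (t (s (t w))), s (t (s (t (s (t w))))), s (t (s (t (s (t (s (t w)))))))] : List V).Pairwise (· ≠ ·) := by
    simp only [List.pairwise_cons, List.mem_cons, List.mem_singleton, List.not_mem_nil,
      forall_eq_or_imp, forall_eq, false_implies, implies_true, and_true, ne_eq,
      List.Pairwise.nil]
    tauto
  rcases hchord5 _ _ _ _ _ pw5 e01 e12 e23 e34 e40 with h | h | h | h | h
  · exact hC _ _ i hne02 (hnotO _ i hw) (hnotO _ (i + 4) hw2) hw hw2 h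
  · exact hC _ _ (i + 2) hne13 (hnotO _ (i + 2) hw1) (hnotO _ (i + 6) hw3) hw1
      (hshift _ (i + 6) (i + 2 + 4)
        (by rw [add_assoc, show (2 : Fin 10) + 4 = 6 from by decide]) hw3) h
  · exact hC _ _ (i + 4) hne24 (hnotO _ (i + 4) hw2) (hnotO _ (i + 8) hw4) hw2
      (hshift _ (i + 8) (i + 4 + 4)
        (by rw [add_assoc, show (4 : Fin 10) + 4 = 8 from by decide]) hw4) h
  · exact hC _ _ (i + 6) hne03.symm (hnotO _ (i + 6) hw3) (hnotO _ i hw) hw3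
      (hshift _ i (i + 6 + 4)
        (by rw [add_assoc, show (6 : Fin 10) + 4 = 0 from by decide, add_zero]) hw) h
  · exact hC _ _ (i + 8) hne14.symm (hnotO _ (i + 8) hw4) (hnotO _ (i + 2) hw1) hw4
      (hshift _ (i + 2) (i + 8 + 4)
        (by rw [add_assoc, show (8 : Fin 10) + 4 = 2 from by decide]) hw1) h
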